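/- Monotone limit of solutions solves the limit problem: let zₙ : [0, ρ̄] → ℝ be an increasing (in n) sequence of continuous functions, C¹ and negative on (0, ρ̄), solving żₙ(φ) = h(φ) − c − D(φ)gₙ(φ)/zₙ(φ), with zₙ(ρ̄) = 0, where gₙ ↓ g₀ uniformly on [0, ρ̄] and there is z₀ with zₙ ≤ z₀ < 0 on each compact subinterval [a, b] ⊂ (0, ρ̄). Then the pointwise limit z̃ = lim zₙ is C¹ on (0, ρ̄) and satisfies ż̃(φ) = h(φ) − c − D(φ)g₀(φ)/z̃(φ) there. -/

import Mathlib

open Set Filter Topology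

/-- Dini's theorem for a nonnegative antitone sequence tending to zero pointwise. -/
private lemma dini_aux {K : Set ℝ} (hK : IsCompact K) {u : ℕ → ℝ → ℝ}
    (hc : ∀ n, ContinuousOn (u n) K)
    (hanti : ∀ x ∈ K, Antitone fun n => u n x)
    (h0 : ∀ n, ∀ x ∈ K, 0 ≤ u n x)
    (hlim : ∀ x ∈ K, Tendsto (fun n => u n x) atTop (𝓝 0)) :
    TendstoUniformlyOn u 0 atTop K := by
  rw [Metric.tendstoUniformlyOn_iff]
  intro ε hε
  have hex : ∀ x (_ : x ∈ K), ∃ N : ℕ, ∃ O : Set ℝ, IsOpen O ∧ x ∈ O ∧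
      ∀ y ∈ O ∩ K, u N y < ε := by
    intro x hx
    obtain ⟨N, hN⟩ := ((hlim x hx).eventually (gt_mem_nhds hε)).exists
    have h2 : ∀ᶠ y in 𝓝[K] x, u N y < ε := (hc N x hx).eventually (gt_mem_nhds hN)
    rw [eventually_iff, mem_nhdsWithin] at h2
    obtain ⟨O, hO1, hO2, hO3⟩ := h2
    exact ⟨N, O, hO1, hO2, fun y hy => hO3 hy⟩
  choose N O hOopen hOmem hOlt using hex
  obtain ⟨t, ht⟩ := hK.elim_nhds_subcover' O
    (fun x hx => (hOopen x hx).mem_nhds (hOmem x hx))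
  refine eventually_atTop.2 ⟨t.sup fun x => N x x.2, fun m hm y hy => ?_⟩
  obtain ⟨x, hxt, hyO⟩ := mem_iUnion₂.1 (ht hy)
  have h1 : u m y ≤ u (N x x.2) y :=
    hanti y hy (le_trans (Finset.le_sup (f := fun x => N x.1 x.2) hxt) hm)
  have h2 : u (N x x.2) y < ε := hOlt x x.2 y ⟨hyO, hy⟩
  have h3 : 0 ≤ u m y := h0 m y hy
  have : dist ((0 : ℝ → ℝ) y) (u m y) = u m y := by
    simp [Real.dist_eq, abs_of_nonneg h3]
  rw [this]
  exact lt_of_le_of_lt h1 h2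

set_option maxHeartbeats 1000000 in
theorem stmt8 (ρ c : ℝ) (hρ : 0 < ρ) (h D g₀ : ℝ → ℝ) (g : ℕ → ℝ → ℝ)
    (z : ℕ → ℝ → ℝ) (z₀ ztilde : ℝ → ℝ)
    (hh : ContinuousOn h (Icc 0 ρ)) (hD : ContinuousOn D (Icc 0 ρ))
    (hDpos : ∀ φ ∈ Ioo 0 ρ, 0 < D φ)
    (hgcont : ∀ n, ContinuousOn (g n) (Icc 0 ρ))
    (hg₀ : ContinuousOn g₀ (Icc 0 ρ))
    (hganti : ∀ φ ∈ Icc 0 ρ, Antitone (fun n => g n φ))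
    (hgunif : TendstoUniformlyOn g g₀ atTop (Icc 0 ρ))
    (hzcont : ∀ n, ContinuousOn (z n) (Icc 0 ρ))
    (hzneg : ∀ n, ∀ φ ∈ Ioo 0 ρ, z n φ < 0)
    (hzρ : ∀ n, z n ρ = 0)
    (hode : ∀ n, ∀ φ ∈ Ioo 0 ρ,
      HasDerivAt (z n) (h φ - c - D φ * g n φ / z n φ) φ)
    (hmono : ∀ φ ∈ Icc 0 ρ, Monotone (fun n => z n φ))
    (hbound : ∀ n, ∀ φ ∈ Ioo 0 ρ, z n φ ≤ z₀ φ ∧ z₀ φ < 0)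
    (hlim : ∀ φ ∈ Icc 0 ρ, Tendsto (fun n => z n φ) atTop (𝓝 (ztilde φ))) :
    (∀ φ ∈ Ioo 0 ρ, HasDerivAt ztilde (h φ - c - D φ * g₀ φ / ztilde φ) φ) ∧
    ContinuousOn (fun φ => h φ - c - D φ * g₀ φ / ztilde φ) (Ioo 0 ρ) := by
  have hsub : Ioo 0 ρ ⊆ Icc 0 ρ := Ioo_subset_Icc_self
  have hle : ∀ t ∈ Icc 0 ρ, ∀ n, z n t ≤ ztilde t := fun t ht n =>
    (hmono t ht).ge_of_tendsto (hlim t ht) n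
  have hztneg : ∀ t ∈ Ioo 0 ρ, ztilde t < 0 := by
    intro t ht
    have h1 : ztilde t ≤ z₀ t :=
      le_of_tendsto (hlim t (hsub ht)) (Eventually.of_forall fun n => (hbound n t ht).1)
    exact lt_of_le_of_lt h1 (hbound 0 t ht).2
  have hglim : ∀ t ∈ Icc 0 ρ, Tendsto (fun n => g n t) atTop (𝓝 (g₀ t)) :=
    fun t ht => hgunif.tendsto_at ht
  have hgle : ∀ t ∈ Icc 0 ρ, ∀ n, g₀ t ≤ g n t := fun t ht n =>
    (hganti t ht).le_of_tendsto (hglim t ht) n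
  have key : ∀ x ∈ Ioo 0 ρ,
      HasDerivAt ztilde (h x - c - D x * g₀ x / ztilde x) x ∧ ContinuousAt ztilde x := by
    intro x hx
    obtain ⟨hx0, hxρ⟩ := hx
    set a : ℝ := x / 2 with ha_def
    set b : ℝ := (x + ρ) / 2 with hb_def
    have ha0 : 0 < a := by positivity
    have hax : a < x := by rw [ha_def]; linarith
    have hxb : x < b := by rw [hb_def]; linarith
    have hbρ : b < ρ := by rw [hb_def]; linarith
    have hIab : Icc a b ⊆ Ioo 0 ρ := fun t ht =>
      ⟨lt_of_lt_of_le ha0 ht.1, lt_of_le_of_lt ht.2 hbρ⟩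
    have hIab' : Icc a b ⊆ Icc 0 ρ := hIab.trans hsub
    have hxab : x ∈ Icc a b := ⟨le_of_lt hax, le_of_lt hxb⟩
    -- bounds on [a, b]
    obtain ⟨Mz, hMz⟩ := (isCompact_Icc : IsCompact (Icc a b)).exists_bound_of_continuousOn
      ((hzcont 0).mono hIab')
    obtain ⟨Mh, hMh⟩ := (isCompact_Icc : IsCompact (Icc a b)).exists_bound_of_continuousOn
      ((hh.mono hIab').sub continuousOn_const)
    obtain ⟨MD, hMD⟩ := (isCompact_Icc : IsCompact (Icc a b)).exists_bound_of_continuousOn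
      (hD.mono hIab')
    obtain ⟨Mg, hMg⟩ := (isCompact_Icc : IsCompact (Icc a b)).exists_bound_of_continuousOn
      (((hgcont 0).mono hIab').abs.add (hg₀.mono hIab').abs)
    have hMg' : ∀ n, ∀ t ∈ Icc a b, |g n t| ≤ Mg ∧ |g₀ t| ≤ Mg := by
      intro n t ht
      have h1 := hMg t ht
      rw [Real.norm_eq_abs] at h1
      have h2 : |g 0 t| + |g₀ t| ≤ Mg := le_trans (le_abs_self _) h1
      have h3 : 0 ≤ |g 0 t| := abs_nonneg _
      have h4 : 0 ≤ |g₀ t| := abs_nonneg _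
      have h5 : g₀ t ≤ g n t := hgle t (hIab' ht) n
      have h6 : g n t ≤ g 0 t := hganti t (hIab' ht) (Nat.zero_le n)
      constructor
      · rw [abs_le]
        constructor
        · have := neg_abs_le (g₀ t); linarith
        · have := le_abs_self (g 0 t); linarith
      · linarith
    have hMz' : ∀ n, ∀ t ∈ Icc a b, |z n t| ≤ Mz ∧ |ztilde t| ≤ Mz := by
      intro n t ht
      have h1 := hMz t ht
      rw [Real.norm_eq_abs] at h1
      have h2 : z 0 t ≤ z n t := hmono t (hIab' ht) (Nat.zero_le n)
      have h3 : z n t ≤ ztilde t := hle t (hIab' ht) n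
      have h4 : ztilde t < 0 := hztneg t (hIab ht)
      have h5 := neg_abs_le (z 0 t)
      constructor
      · rw [abs_le]; constructor <;> [linarith; linarith]
      · rw [abs_le]; constructor <;> [linarith; linarith]
    have hMz0 : 0 ≤ Mz := le_trans (abs_nonneg _) (hMz' 0 x hxab).1
    have hMh0 : 0 ≤ Mh := le_trans (norm_nonneg _) (hMh x hxab)
    have hMD0 : 0 ≤ MD := le_trans (norm_nonneg _) (hMD x hxab)
    have hMg0 : 0 ≤ Mg := le_trans (abs_nonneg _) (hMg' 0 x hxab).1
    -- derivative of squares and uniform Lipschitz bound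
    have hwderiv : ∀ n, ∀ t ∈ Icc a b,
        HasDerivAt (fun s => z n s ^ 2)
          (2 * z n t * (h t - c) - 2 * (D t * g n t)) t := by
      intro n t ht
      have h1 : HasDerivAt (fun s => z n s ^ 2)
          ((2:ℕ) * z n t ^ (2 - 1) * (h t - c - D t * g n t / z n t)) t :=
        (hode n t (hIab ht)).pow 2
      have hz0 : z n t ≠ 0 := ne_of_lt (hzneg n t (hIab ht))
      convert h1 using 1
      field_simp
      ring
    set Kc : ℝ := 2 * Mz * Mh + 2 * (MD * Mg) with hKc_def
    have hKbound : ∀ n, ∀ t ∈ Icc a b,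
        ‖2 * z n t * (h t - c) - 2 * (D t * g n t)‖ ≤ Kc := by
      intro n t ht
      have h1 : |z n t| ≤ Mz := (hMz' n t ht).1
      have h2 : |h t - c| ≤ Mh := by have := hMh t ht; rwa [Real.norm_eq_abs] at this
      have h3 : |D t| ≤ MD := by have := hMD t ht; rwa [Real.norm_eq_abs] at this
      have h4 : |g n t| ≤ Mg := (hMg' n t ht).1
      rw [Real.norm_eq_abs]
      have e1 : |2 * z n t * (h t - c) - 2 * (D t * g n t)| ≤
          |2 * z n t * (h t - c)| + |2 * (D t * g n t)| := abs_sub _ _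
      have e2 : |2 * z n t * (h t - c)| = 2 * |z n t| * |h t - c| := by
        rw [abs_mul, abs_mul]; simp
      have e3 : |2 * (D t * g n t)| = 2 * (|D t| * |g n t|) := by
        rw [abs_mul, abs_mul]; simp
      rw [e2, e3] at e1
      have e4 : 2 * |z n t| * |h t - c| ≤ 2 * Mz * Mh := by
        have := abs_nonneg (z n t); have := abs_nonneg (h t - c); nlinarith
      have e5 : 2 * (|D t| * |g n t|) ≤ 2 * (MD * Mg) := by
        have := abs_nonneg (D t); have := abs_nonneg (g n t); nlinarith
      rw [hKc_def]; linarith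
    have hKc0 : 0 ≤ Kc := le_trans (norm_nonneg _) (hKbound 0 x hxab)
    have hwlip : ∀ n, ∀ s ∈ Icc a b, ∀ t ∈ Icc a b,
        |z n t ^ 2 - z n s ^ 2| ≤ Kc * |t - s| := by
      intro n s hs t ht
      have := Convex.norm_image_sub_le_of_norm_hasDerivWithin_le
        (f := fun s => z n s ^ 2)
        (f' := fun y => 2 * z n y * (h y - c) - 2 * (D y * g n y))
        (fun y hy => (hwderiv n y hy).hasDerivWithinAt)
        (fun y hy => hKbound n y hy) (convex_Icc a b) hs ht
      simpa [Real.norm_eq_abs] using this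
    -- the limit of squares is Lipschitz, hence ztilde is continuous on [a, b]
    have hwlim : ∀ t ∈ Icc a b, Tendsto (fun n => z n t ^ 2) atTop (𝓝 (ztilde t ^ 2)) :=
      fun t ht => (hlim t (hIab' ht)).pow 2
    have hwlipt : ∀ s ∈ Icc a b, ∀ t ∈ Icc a b,
        |ztilde t ^ 2 - ztilde s ^ 2| ≤ Kc * |t - s| := by
      intro s hs t ht
      have h1 : Tendsto (fun n => |z n t ^ 2 - z n s ^ 2|) atTop
          (𝓝 |ztilde t ^ 2 - ztilde s ^ 2|) := ((hwlim t ht).sub (hwlim s hs)).abs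
      exact le_of_tendsto h1 (Eventually.of_forall fun n => hwlip n s hs t ht)
    have hwcont : ContinuousOn (fun t => ztilde t ^ 2) (Icc a b) := by
      apply LipschitzOnWith.continuousOn (K := Real.toNNReal Kc)
      apply LipschitzOnWith.of_dist_le_mul
      intro s hs t ht
      rw [Real.dist_eq, Real.dist_eq, Real.coe_toNNReal _ hKc0]
      exact hwlipt t ht s hs
    have hztle : ∀ t ∈ Icc a b, ztilde t ≤ 0 := fun t ht => (hztneg t (hIab ht)).le
    have hztcont : ContinuousOn ztilde (Icc a b) := by
      have h1 : ContinuousOn (fun t => -Real.sqrt (ztilde t ^ 2)) (Icc a b) :=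
        (Real.continuous_sqrt.comp_continuousOn hwcont).neg
      apply h1.congr
      intro t ht
      show ztilde t = -Real.sqrt (ztilde t ^ 2)
      rw [Real.sqrt_sq_eq_abs, abs_of_nonpos (hztle t ht), neg_neg]
    -- uniform negativity
    obtain ⟨tm, htm, htmax⟩ := (isCompact_Icc : IsCompact (Icc a b)).exists_isMaxOn
      ⟨x, hxab⟩ hztcont
    set δ : ℝ := -ztilde tm with hδ_def
    have hδ0 : 0 < δ := by
      have := hztneg tm (hIab htm); rw [hδ_def]; linarith
    have hzt_le : ∀ t ∈ Icc a b, ztilde t ≤ -δ := by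
      intro t ht
      have h1 : ztilde t ≤ ztilde tm := htmax ht
      rw [hδ_def]; linarith
    have hzle' : ∀ n, ∀ t ∈ Icc a b, z n t ≤ -δ :=
      fun n t ht => (hle t (hIab' ht) n).trans (hzt_le t ht)
    -- Dini: uniform convergence of the squares, hence of z itself
    have hdini : TendstoUniformlyOn (fun n t => z n t ^ 2 - ztilde t ^ 2) 0 atTop
        (Icc a b) := by
      apply dini_aux isCompact_Icc
      · intro n; exact (((hzcont n).mono hIab').pow 2).sub hwcont
      · intro t ht m k hmk
        simp only
        have h1 : z m t ≤ z k t := hmono t (hIab' ht) hmk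
        have h2 : z k t ≤ -δ := hzle' k t ht
        nlinarith
      · intro n t ht
        have h1 : z n t ≤ ztilde t := hle t (hIab' ht) n
        have h2 : ztilde t ≤ -δ := hzt_le t ht
        nlinarith
      · intro t ht
        have := ((hlim t (hIab' ht)).pow 2).sub_const (ztilde t ^ 2)
        simpa using this
    have hzunif : TendstoUniformlyOn z ztilde atTop (Icc a b) := by
      rw [Metric.tendstoUniformlyOn_iff]
      intro ε hε
      have hε' : 0 < 2 * δ * ε := by positivity
      filter_upwards [Metric.tendstoUniformlyOn_iff.1 hdini (2 * δ * ε) hε'] with n hn t ht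
      have h1 := hn t ht
      rw [Real.dist_eq] at h1
      have h2 : z n t ≤ ztilde t := hle t (hIab' ht) n
      have h3 : z n t ≤ -δ := hzle' n t ht
      have h4 : ztilde t ≤ -δ := hzt_le t ht
      have h5 : z n t ^ 2 - ztilde t ^ 2 < 2 * δ * ε := by
        have h6 : z n t ^ 2 - ztilde t ^ 2 ≤ |(0 : ℝ → ℝ) t - (z n t ^ 2 - ztilde t ^ 2)| := by
          simp only [Pi.zero_apply, zero_sub, abs_neg]
          exact le_abs_self _
        exact lt_of_le_of_lt h6 h1
      rw [Real.dist_eq, abs_of_nonneg (by linarith : (0:ℝ) ≤ ztilde t - z n t)]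
      nlinarith [mul_nonneg (sub_nonneg.2 h2)
        (by linarith : (0:ℝ) ≤ -z n t - ztilde t - 2 * δ)]
    -- uniform convergence of the derivatives
    have hFunif : TendstoUniformlyOn (fun n t => h t - c - D t * g n t / z n t)
        (fun t => h t - c - D t * g₀ t / ztilde t) atTop (Icc a b) := by
      rw [Metric.tendstoUniformlyOn_iff]
      intro ε hε
      set ε' : ℝ := ε * (δ * δ) / (MD * (Mz + Mg) + 1) with hε'_def
      have hden : 0 < MD * (Mz + Mg) + 1 := by positivity
      have hε'0 : 0 < ε' := by rw [hε'_def]; positivity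
      filter_upwards [Metric.tendstoUniformlyOn_iff.1 hgunif ε' hε'0,
        Metric.tendstoUniformlyOn_iff.1 hzunif ε' hε'0] with n hgn hzn t ht
      have htI := hIab' ht
      have e1 : |g₀ t - g n t| < ε' := by have := hgn t htI; rwa [Real.dist_eq] at this
      have e2 : |ztilde t - z n t| < ε' := by have := hzn t ht; rwa [Real.dist_eq] at this
      have h3 : z n t ≤ -δ := hzle' n t ht
      have h4 : ztilde t ≤ -δ := hzt_le t ht
      have hzn0 : z n t ≠ 0 := by intro hc0; rw [hc0] at h3; linarith
      have hzt0 : ztilde t ≠ 0 := by intro hc0; rw [hc0] at h4; linarith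
      rw [Real.dist_eq]
      have key_eq : (h t - c - D t * g₀ t / ztilde t) - (h t - c - D t * g n t / z n t)
          = D t * (g n t * ztilde t - g₀ t * z n t) / (z n t * ztilde t) := by
        field_simp
        ring
      rw [key_eq]
      have hnum : |g n t * ztilde t - g₀ t * z n t| ≤ ε' * Mz + Mg * ε' := by
        have he : g n t * ztilde t - g₀ t * z n t =
            (g n t - g₀ t) * ztilde t + g₀ t * (ztilde t - z n t) := by ring
        rw [he]
        calc |(g n t - g₀ t) * ztilde t + g₀ t * (ztilde t - z n t)|
            ≤ |(g n t - g₀ t) * ztilde t| + |g₀ t * (ztilde t - z n t)| := abs_add_le _ _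
          _ = |g n t - g₀ t| * |ztilde t| + |g₀ t| * |ztilde t - z n t| := by
              rw [abs_mul, abs_mul]
          _ ≤ ε' * Mz + Mg * ε' := by
              apply add_le_add
              · exact mul_le_mul (by rw [abs_sub_comm]; exact e1.le) (hMz' n t ht).2
                  (abs_nonneg _) hε'0.le
              · exact mul_le_mul (hMg' n t ht).2 e2.le (abs_nonneg _) hMg0
      have hdenlb : δ * δ ≤ |z n t * ztilde t| := by
        rw [abs_mul]
        have i1 : δ ≤ |z n t| := by rw [abs_of_nonpos (by linarith)]; linarith
        have i2 : δ ≤ |ztilde t| := by rw [abs_of_nonpos (by linarith)]; linarith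
        exact mul_le_mul i1 i2 hδ0.le (abs_nonneg _)
      have hDt : |D t| ≤ MD := by have := hMD t ht; rwa [Real.norm_eq_abs] at this
      have hfinal : |D t * (g n t * ztilde t - g₀ t * z n t) / (z n t * ztilde t)|
          ≤ MD * (ε' * Mz + Mg * ε') / (δ * δ) := by
        rw [abs_div, abs_mul]
        exact div_le_div₀
          (mul_nonneg hMD0 (add_nonneg (mul_nonneg hε'0.le hMz0) (mul_nonneg hMg0 hε'0.le)))
          (mul_le_mul hDt hnum (abs_nonneg _) hMD0)
          (mul_pos hδ0 hδ0) hdenlb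
      refine lt_of_le_of_lt hfinal ?_
      have hkey : ε' * (MD * (Mz + Mg) + 1) = ε * (δ * δ) := by
        rw [hε'_def]; exact div_mul_cancel₀ _ hden.ne'
      rw [div_lt_iff₀ (mul_pos hδ0 hδ0)]
      nlinarith [hε'0, hkey, mul_nonneg hMD0 (add_nonneg hMz0 hMg0)]
    -- pass to the limit in the derivative
    have hxIoo : x ∈ Ioo a b := ⟨hax, hxb⟩
    have hderiv : HasDerivAt ztilde (h x - c - D x * g₀ x / ztilde x) x := by
      exact hasDerivAt_of_tendstoUniformlyOn (isOpen_Ioo (a := a) (b := b))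
        (hFunif.mono Ioo_subset_Icc_self)
        (Eventually.of_forall fun n t ht => hode n t (hIab (Ioo_subset_Icc_self ht)))
        (fun t ht => hlim t (hIab' (Ioo_subset_Icc_self ht))) hxIoo
    exact ⟨hderiv, hztcont.continuousAt (Icc_mem_nhds hax hxb)⟩
  refine ⟨fun x hx => (key x hx).1, ?_⟩
  have hztc : ContinuousOn ztilde (Ioo 0 ρ) := fun x hx => ((key x hx).2).continuousWithinAt
  exact ((hh.mono hsub).sub continuousOn_const).sub
    (((hD.mono hsub).mul (hg₀.mono hsub)).div hztc fun t ht => (hztneg t ht).ne)
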